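/- Let t_0 ∉ supp(ν) ∪ Θ be such that ∫ dν(x)/(t_0−x)² = 1 and ∫ dν(x)/(t_0−x)³ ≠ 0, and for ε > 0 small enough let t_0(N) be the unique point of ]t_0−ε, t_0+ε[ with ∫ dμ_{A_N}(x)/(t_0(N)−x)² = 1 (which exists for all N large enough). If ]t_0−ε, t_0[ ⊂ U_ν and ]t_0, t_0+ε[ ⊂ ℝ \ U_ν, then for all N large enough ]t_0−ε, t_0+ε[ ∩ U_N = ]t_0−ε, t_0(N)[. If instead ]t_0, t_0+ε[ ⊂ U_ν and ]t_0−ε, t_0[ ⊂ ℝ \ U_ν, then for all N large enough ]t_0−ε, t_0+ε[ ∩ U_N = ]t_0(N), t_0+ε[. -/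

import Mathlib

open MeasureTheory Filter Topology Set
open scoped ENNReal

/-- `v_μ(u) = inf {v ≥ 0 : ∫ dμ(x)/((u−x)² + v²) ≤ 1}`. -/
noncomputable def vF (μ : Measure ℝ) (u : ℝ) : ℝ :=
  sInf {v : ℝ | 0 ≤ v ∧ ∫ x, ((u - x) ^ 2 + v ^ 2)⁻¹ ∂μ ≤ 1}

/-- `U_μ = {t : v_μ(t) > 0}`. -/
def USet (μ : Measure ℝ) : Set ℝ := {t | 0 < vF μ t}

/-- `H_μ(z) = z + ∫ dμ(x)/(z−x)`. -/
noncomputable def HF (μ : Measure ℝ) (z : ℝ) : ℝ := z + ∫ x, (z - x)⁻¹ ∂μ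

/-- `Ψ_μ(t) = t + ∫ (t−x) dμ(x)/((t−x)² + v_μ(t)²)`. -/
noncomputable def PsiF (μ : Measure ℝ) (t : ℝ) : ℝ :=
  t + ∫ x, (t - x) / ((t - x) ^ 2 + vF μ t ^ 2) ∂μ

/-- The (topological) support of a measure on ℝ. -/
def MeasSupp (μ : Measure ℝ) : Set ℝ := {x | ∀ U ∈ nhds x, μ U ≠ 0}

/-- `ν̂_N = (1/(N−r)) Σ_{j=1}^{N−r} δ_{β_j(N)}`. -/
noncomputable def hatNu (r : ℕ) (β : ℕ → ℕ → ℝ) (N : ℕ) : Measure ℝ :=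
  ((N - r : ℕ) : ℝ≥0∞)⁻¹ • ∑ i ∈ Finset.range (N - r), Measure.dirac (β N i)

section AuxStmt11


lemma stmt11_integrable_dirac (f : ℝ → ℝ) (a : ℝ) : Integrable f (Measure.dirac a) :=
  (integrable_const (f a)).congr (ae_eq_dirac f).symm

lemma stmt11_integral_muA {J r N : ℕ} (θ : Fin J → ℝ) (k : Fin J → ℕ) (b : ℕ → ℝ)
    (μ : Measure ℝ)
    (hμ : μ = (N : ℝ≥0∞)⁻¹ • ((∑ j, (k j : ℝ≥0∞) • Measure.dirac (θ j)) +
        ∑ i ∈ Finset.range (N - r), Measure.dirac (b i))) (f : ℝ → ℝ) :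
    ∫ x, f x ∂μ = (N : ℝ)⁻¹ * ((∑ j, (k j : ℝ) * f (θ j)) +
      ∑ i ∈ Finset.range (N - r), f (b i)) := by
  subst hμ
  rw [integral_smul_measure]
  have h1 : ∀ j : Fin J, j ∈ Finset.univ →
      Integrable f ((k j : ℝ≥0∞) • Measure.dirac (θ j)) := fun j _ =>
    (stmt11_integrable_dirac f (θ j)).smul_measure (by simp)
  have h2 : ∀ i ∈ Finset.range (N - r), Integrable f (Measure.dirac (b i)) := fun i _ =>
    stmt11_integrable_dirac f (b i)
  rw [integral_add_measure (integrable_finset_sum_measure.2 h1)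
    (integrable_finset_sum_measure.2 h2),
    integral_finset_sum_measure h1, integral_finset_sum_measure h2]
  simp [integral_smul_measure, smul_eq_mul]

lemma stmt11_vF_not_pos {μ : Measure ℝ} {t : ℝ}
    (h : ∫ x, ((t - x) ^ 2)⁻¹ ∂μ ≤ 1) : ¬ (0 < vF μ t) := by
  intro hpos
  have h0 : (0 : ℝ) ∈ {v : ℝ | 0 ≤ v ∧ ∫ x, ((t - x) ^ 2 + v ^ 2)⁻¹ ∂μ ≤ 1} :=
    ⟨le_refl 0, by simpa using h⟩
  have hb : BddBelow {v : ℝ | 0 ≤ v ∧ ∫ x, ((t - x) ^ 2 + v ^ 2)⁻¹ ∂μ ≤ 1} :=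
    ⟨0, fun v hv => hv.1⟩
  have := csInf_le hb h0
  rw [vF] at hpos
  linarith

lemma stmt11_vF_pos {μ : Measure ℝ} {t δ : ℝ} (hδ : 0 < δ)
    (h1 : ∫ x, ((t - x) ^ 2 + 1 ^ 2)⁻¹ ∂μ ≤ 1)
    (h2 : ∀ v : ℝ, 0 ≤ v → v < δ → 1 < ∫ x, ((t - x) ^ 2 + v ^ 2)⁻¹ ∂μ) :
    0 < vF μ t := by
  have hle : δ ≤ vF μ t := by
    have hmem : (1 : ℝ) ∈ {v : ℝ | 0 ≤ v ∧ ∫ x, ((t - x) ^ 2 + v ^ 2)⁻¹ ∂μ ≤ 1} :=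
      ⟨by norm_num, h1⟩
    apply le_csInf ⟨1, hmem⟩
    intro v hv
    by_contra hlt
    push_neg at hlt
    exact absurd hv.2 (not_le.2 (h2 v hv.1 hlt))
  linarith

lemma stmt11_hasDerivAt_inv2 (a t : ℝ) (h : t ≠ a) :
    HasDerivAt (fun s => ((s - a) ^ 2)⁻¹) (-2 * ((t - a) ^ 3)⁻¹) t := by
  have hu : t - a ≠ 0 := sub_ne_zero.2 h
  have h1 : HasDerivAt (fun s : ℝ => (s - a) ^ 2) ((2 : ℕ) * (t - a) ^ (2 - 1) * 1) t :=
    ((hasDerivAt_id t).sub_const a).pow 2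
  have h2 := h1.inv (pow_ne_zero 2 hu)
  refine h2.congr_deriv ?_
  field_simp
  ring

lemma stmt11_hasDerivAt_inv3 (a t : ℝ) (h : t ≠ a) :
    HasDerivAt (fun s => ((s - a) ^ 3)⁻¹) (-3 * ((t - a) ^ 4)⁻¹) t := by
  have hu : t - a ≠ 0 := sub_ne_zero.2 h
  have h1 : HasDerivAt (fun s : ℝ => (s - a) ^ 3) ((3 : ℕ) * (t - a) ^ (3 - 1) * 1) t :=
    ((hasDerivAt_id t).sub_const a).pow 3
  have h2 := h1.inv (pow_ne_zero 3 hu)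
  refine h2.congr_deriv ?_
  field_simp
  ring

lemma stmt11_factor_sum {J M : ℕ} (C D : ℝ) (k : Fin J → ℕ) (a : Fin J → ℝ) (b : ℕ → ℝ) :
    C * (D * ((∑ j, (k j : ℝ) * a j) + ∑ i ∈ Finset.range M, b i)) =
    D * ((∑ j, (k j : ℝ) * (C * a j)) + ∑ i ∈ Finset.range M, C * b i) := by
  have e1 : ∑ j, (k j : ℝ) * (C * a j) = C * ∑ j, (k j : ℝ) * a j := by
    rw [Finset.mul_sum]
    exact Finset.sum_congr rfl fun j _ => by ring
  have e2 : ∑ i ∈ Finset.range M, C * b i = C * ∑ i ∈ Finset.range M, b i :=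
    (Finset.mul_sum _ _ _).symm
  rw [e1, e2]
  ring

lemma stmt11_sum_bound {J r N : ℕ} (k : Fin J → ℕ) (hkr : ∑ j, k j = r) (hrN : r ≤ N)
    (hN : 0 < N) (u : Fin J → ℝ) (w : ℕ → ℝ) (M : ℝ) (hM : 0 ≤ M)
    (hu : ∀ j, u j ≤ M) (hw : ∀ i ∈ Finset.range (N - r), w i ≤ M) :
    (N : ℝ)⁻¹ * ((∑ j, (k j : ℝ) * u j) + ∑ i ∈ Finset.range (N - r), w i) ≤ M := by
  have hA : (∑ j, (k j : ℝ) * u j) ≤ (r : ℝ) * M := by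
    calc (∑ j, (k j : ℝ) * u j) ≤ ∑ j, (k j : ℝ) * M :=
          Finset.sum_le_sum fun j _ => mul_le_mul_of_nonneg_left (hu j) (by positivity)
      _ = (r : ℝ) * M := by
          rw [← Finset.sum_mul]
          congr 1
          exact_mod_cast congrArg (Nat.cast (R := ℝ)) hkr
  have hB : (∑ i ∈ Finset.range (N - r), w i) ≤ ((N - r : ℕ) : ℝ) * M := by
    calc (∑ i ∈ Finset.range (N - r), w i) ≤ ∑ _i ∈ Finset.range (N - r), M :=
          Finset.sum_le_sum hw
      _ = ((N - r : ℕ) : ℝ) * M := by simp [mul_comm]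
  have hNR : ((N - r : ℕ) : ℝ) = (N : ℝ) - r := by
    rw [Nat.cast_sub hrN]
  have hNpos : (0 : ℝ) < N := by exact_mod_cast hN
  calc (N : ℝ)⁻¹ * ((∑ j, (k j : ℝ) * u j) + ∑ i ∈ Finset.range (N - r), w i)
      ≤ (N : ℝ)⁻¹ * ((r : ℝ) * M + ((N - r : ℕ) : ℝ) * M) := by
        apply mul_le_mul_of_nonneg_left (add_le_add hA hB) (by positivity)
    _ = M := by
        rw [hNR]
        field_simp
        ring

lemma stmt11_sum_mono {J r N : ℕ} (k : Fin J → ℕ) (u u' : Fin J → ℝ) (w w' : ℕ → ℝ)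
    (hu : ∀ j, u j ≤ u' j) (hw : ∀ i ∈ Finset.range (N - r), w i ≤ w' i) :
    (N : ℝ)⁻¹ * ((∑ j, (k j : ℝ) * u j) + ∑ i ∈ Finset.range (N - r), w i) ≤
    (N : ℝ)⁻¹ * ((∑ j, (k j : ℝ) * u' j) + ∑ i ∈ Finset.range (N - r), w' i) := by
  apply mul_le_mul_of_nonneg_left _ (by positivity)
  exact add_le_add
    (Finset.sum_le_sum fun j _ => mul_le_mul_of_nonneg_left (hu j) (by positivity))
    (Finset.sum_le_sum hw)

lemma stmt11_gap (F H : ℝ → ℝ) (m lo hi : ℝ)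
    (hder : ∀ t ∈ Icc lo hi, HasDerivAt F (-2 * H t) t)
    (hH : ∀ t ∈ Icc lo hi, m ≤ H t)
    {a b : ℝ} (ha : a ∈ Icc lo hi) (hb : b ∈ Icc lo hi) (hab : a ≤ b) :
    F b ≤ F a - 2 * m * (b - a) := by
  have hGder : ∀ t ∈ Icc lo hi, HasDerivAt (fun s => F s + 2 * m * s) (-2 * H t + 2 * m) t := by
    intro t ht
    have h2 : HasDerivAt (fun s : ℝ => 2 * m * s) (2 * m) t := by
      simpa using (hasDerivAt_id t).const_mul (2 * m)
    exact (hder t ht).add h2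
  have hanti : AntitoneOn (fun s => F s + 2 * m * s) (Icc lo hi) := by
    apply antitoneOn_of_deriv_nonpos (convex_Icc lo hi)
    · exact fun t ht => (hGder t ht).continuousAt.continuousWithinAt
    · exact fun t ht =>
        ((hGder t (interior_subset ht)).differentiableAt).differentiableWithinAt
    · intro t ht
      rw [(hGder t (interior_subset ht)).deriv]
      have := hH t (interior_subset ht)
      linarith
  have := hanti ha hb hab
  simp only at this
  linarith

lemma stmt11_reflect_deriv (F H : ℝ → ℝ) (t₀ ε₀ : ℝ)
    (hder : ∀ t ∈ Icc (t₀ - ε₀) (t₀ + ε₀), HasDerivAt F (-2 * H t) t) :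
    ∀ t ∈ Icc (t₀ - ε₀) (t₀ + ε₀),
      HasDerivAt (fun s => F (2 * t₀ - s)) (-2 * (-(H (2 * t₀ - t)))) t := by
  intro t ht
  have hmem : 2 * t₀ - t ∈ Icc (t₀ - ε₀) (t₀ + ε₀) := by
    constructor
    · have := ht.2; linarith
    · have := ht.1; linarith
  have h2 : HasDerivAt (fun s : ℝ => 2 * t₀ - s) (-1) t := by
    simpa using (hasDerivAt_id t).const_sub (2 * t₀)
  have h3 := (hder _ hmem).comp t h2
  refine h3.congr_deriv ?_
  ring

lemma stmt11_core (F H : ℝ → ℝ) (t₀ ε₀ ε m : ℝ)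
    (hε : 0 < ε) (hεε₀ : ε ≤ ε₀) (hm : 0 < m)
    (hder : ∀ t ∈ Icc (t₀ - ε₀) (t₀ + ε₀), HasDerivAt F (-2 * H t) t)
    (hH : ∀ t ∈ Icc (t₀ - ε₀) (t₀ + ε₀), m ≤ H t)
    (hF0 : |F t₀ - 1| < m * ε / 2) :
    ∃ tN ∈ Ioo (t₀ - ε / 2) (t₀ + ε / 2), F tN = 1 ∧
      StrictAntiOn F (Icc (t₀ - ε₀) (t₀ + ε₀)) ∧
      ∀ t ∈ Ioo (t₀ - ε) (t₀ + ε), (1 < F t ↔ t < tN) := by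
  have hε₀ : 0 < ε₀ := lt_of_lt_of_le hε hεε₀
  have hIt₀ : t₀ ∈ Icc (t₀ - ε₀) (t₀ + ε₀) := by constructor <;> linarith
  have hIa : t₀ - ε / 2 ∈ Icc (t₀ - ε₀) (t₀ + ε₀) := by constructor <;> linarith
  have hIb : t₀ + ε / 2 ∈ Icc (t₀ - ε₀) (t₀ + ε₀) := by constructor <;> linarith
  have cont : ContinuousOn F (Icc (t₀ - ε₀) (t₀ + ε₀)) :=
    fun t ht => (hder t ht).continuousAt.continuousWithinAt
  have sAnti : StrictAntiOn F (Icc (t₀ - ε₀) (t₀ + ε₀)) := by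
    apply strictAntiOn_of_deriv_neg (convex_Icc _ _) cont
    intro t ht
    rw [(hder t (interior_subset ht)).deriv]
    have := hH t (interior_subset ht)
    nlinarith
  have habs := abs_lt.1 hF0
  have g1 : F (t₀ + ε / 2) ≤ F t₀ - 2 * m * ((t₀ + ε / 2) - t₀) :=
    stmt11_gap F H m _ _ hder hH hIt₀ hIb (by linarith)
  have g2 : F t₀ ≤ F (t₀ - ε / 2) - 2 * m * (t₀ - (t₀ - ε / 2)) :=
    stmt11_gap F H m _ _ hder hH hIa hIt₀ (by linarith)
  have e1 : 2 * m * ((t₀ + ε / 2) - t₀) = m * ε := by ring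
  have e2 : 2 * m * (t₀ - (t₀ - ε / 2)) = m * ε := by ring
  rw [e1] at g1
  rw [e2] at g2
  have hFb : F (t₀ + ε / 2) < 1 := by linarith
  have hFa : 1 < F (t₀ - ε / 2) := by linarith
  have hsub : Icc (t₀ - ε / 2) (t₀ + ε / 2) ⊆ Icc (t₀ - ε₀) (t₀ + ε₀) :=
    Icc_subset_Icc (by linarith) (by linarith)
  obtain ⟨tN, htN, hFtN⟩ := intermediate_value_Ioo' (by linarith : t₀ - ε / 2 ≤ t₀ + ε / 2)
    (cont.mono hsub) (⟨hFb, hFa⟩ : (1 : ℝ) ∈ Ioo (F (t₀ + ε / 2)) (F (t₀ - ε / 2)))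
  have htNI : tN ∈ Icc (t₀ - ε₀) (t₀ + ε₀) := hsub ⟨htN.1.le, htN.2.le⟩
  refine ⟨tN, htN, hFtN, sAnti, ?_⟩
  intro t ht
  have htI : t ∈ Icc (t₀ - ε₀) (t₀ + ε₀) := by
    constructor
    · have := ht.1; linarith
    · have := ht.2; linarith
  constructor
  · intro h1
    by_contra hcon
    push_neg at hcon
    rcases eq_or_lt_of_le hcon with heq | hlt
    · rw [← heq, hFtN] at h1; exact lt_irrefl _ h1
    · have := sAnti htNI htI hlt
      rw [hFtN] at this
      linarith
  · intro hlt
    have := sAnti htI htNI hlt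
    rw [hFtN] at this
    exact this


lemma stmt11_measSupp_closed (μ : Measure ℝ) : IsClosed (MeasSupp μ) := by
  rw [← isOpen_compl_iff, isOpen_iff_mem_nhds]
  intro x hx
  simp only [mem_compl_iff, MeasSupp, mem_setOf_eq] at hx
  push_neg at hx
  obtain ⟨U, hU, h0⟩ := hx
  refine mem_of_superset (interior_mem_nhds.2 hU) ?_
  intro y hy
  simp only [mem_compl_iff, MeasSupp, mem_setOf_eq]
  push_neg
  exact ⟨U, mem_nhds_iff.2 ⟨interior U, interior_subset, isOpen_interior, hy⟩, h0⟩

lemma stmt11_measSupp_ae (μ : Measure ℝ) : μ (MeasSupp μ)ᶜ = 0 := by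
  apply measure_null_of_locally_null
  intro x hx
  simp only [mem_compl_iff, MeasSupp, mem_setOf_eq] at hx
  push_neg at hx
  obtain ⟨U, hU, h0⟩ := hx
  exact ⟨U, nhdsWithin_le_nhds hU, h0⟩

lemma stmt11_measSupp_nonempty (μ : Measure ℝ) [IsProbabilityMeasure μ] :
    (MeasSupp μ).Nonempty := by
  by_contra h
  rw [not_nonempty_iff_eq_empty] at h
  have huniv : μ Set.univ = 0 := by
    apply measure_null_of_locally_null
    intro x _
    have hx : x ∉ MeasSupp μ := by rw [h]; exact notMem_empty x
    simp only [MeasSupp, mem_setOf_eq] at hx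
    push_neg at hx
    obtain ⟨U, hU, h0⟩ := hx
    exact ⟨U, nhdsWithin_le_nhds hU, h0⟩
  simp [measure_univ] at huniv

lemma stmt11_trunc2 (s c : ℝ) (hc : 0 < c) :
    ∃ F : BoundedContinuousFunction ℝ ℝ, ∀ x, F x = ((max |s - x| c) ^ 2)⁻¹ := by
  have hcont : Continuous fun x : ℝ => ((max |s - x| c) ^ 2)⁻¹ := by
    apply Continuous.inv₀
    · exact (((continuous_const.sub continuous_id).abs.max continuous_const).pow 2)
    · intro x
      have : 0 < max |s - x| c := lt_of_lt_of_le hc (le_max_right _ _)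
      positivity
  refine ⟨BoundedContinuousFunction.ofNormedAddCommGroup _ hcont ((c ^ 2)⁻¹) ?_, fun x => rfl⟩
  intro x
  have h1 : 0 < max |s - x| c := lt_of_lt_of_le hc (le_max_right _ _)
  rw [Real.norm_eq_abs, abs_of_pos (by positivity)]
  exact inv_anti₀ (by positivity) (pow_le_pow_left₀ hc.le (le_max_right _ _) 2)

lemma stmt11_trunc3 (s c : ℝ) (hc : 0 < c) :
    ∃ F : BoundedContinuousFunction ℝ ℝ,
      ∀ x, F x = (s - x) * ((max |s - x| c) ^ 4)⁻¹ := by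
  have hcont : Continuous fun x : ℝ => (s - x) * ((max |s - x| c) ^ 4)⁻¹ := by
    apply Continuous.mul (continuous_const.sub continuous_id)
    apply Continuous.inv₀
    · exact (((continuous_const.sub continuous_id).abs.max continuous_const).pow 4)
    · intro x
      have : 0 < max |s - x| c := lt_of_lt_of_le hc (le_max_right _ _)
      positivity
  refine ⟨BoundedContinuousFunction.ofNormedAddCommGroup _ hcont ((c ^ 3)⁻¹) ?_, fun x => rfl⟩
  intro x
  set M := max |s - x| c with hM
  have h1 : 0 < M := lt_of_lt_of_le hc (le_max_right _ _)
  have h2 : |s - x| ≤ M := le_max_left _ _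
  rw [Real.norm_eq_abs, abs_mul, abs_of_pos (show (0:ℝ) < (M ^ 4)⁻¹ by positivity)]
  have h3 : |s - x| * (M ^ 4)⁻¹ ≤ M * (M ^ 4)⁻¹ :=
    mul_le_mul_of_nonneg_right h2 (by positivity)
  have h4 : M * (M ^ 4)⁻¹ = (M ^ 3)⁻¹ := by
    field_simp
  have h5 : (M ^ 3)⁻¹ ≤ (c ^ 3)⁻¹ :=
    inv_anti₀ (by positivity) (pow_le_pow_left₀ hc.le (le_max_right _ _) 3)
  calc |s - x| * (M ^ 4)⁻¹ ≤ M * (M ^ 4)⁻¹ := h3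
    _ = (M ^ 3)⁻¹ := h4
    _ ≤ (c ^ 3)⁻¹ := h5

lemma stmt11_tendsto_sum {J r : ℕ} (θ : Fin J → ℝ) (k : Fin J → ℕ) (β : ℕ → ℕ → ℝ)
    (μA : ℕ → Measure ℝ) (ν : Measure ℝ)
    (hdecomp : ∀ N, r ≤ N → μA N = (N : ℝ≥0∞)⁻¹ •
      ((∑ j, (k j : ℝ≥0∞) • Measure.dirac (θ j)) +
        ∑ i ∈ Finset.range (N - r), Measure.dirac (β N i)))
    (hweak : ∀ f : BoundedContinuousFunction ℝ ℝ,
      Tendsto (fun N => ∫ x, f x ∂(μA N)) atTop (𝓝 (∫ x, f x ∂ν)))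
    (hβ : ∀ ε > 0, ∀ᶠ N in atTop, ∀ i ∈ Finset.range (N - r),
      Metric.infDist (β N i) (MeasSupp ν) < ε)
    (f : ℝ → ℝ) (F : BoundedContinuousFunction ℝ ℝ) (d4 : ℝ) (hd4 : 0 < d4)
    (hθF : ∀ j, F (θ j) = f (θ j))
    (hSF : ∀ x, Metric.infDist x (MeasSupp ν) < d4 → F x = f x) :
    Tendsto (fun N : ℕ => (N : ℝ)⁻¹ * ((∑ j, (k j : ℝ) * f (θ j)) +
      ∑ i ∈ Finset.range (N - r), f (β N i))) atTop (𝓝 (∫ x, F x ∂ν)) := by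
  apply Tendsto.congr' _ (hweak F)
  filter_upwards [hβ d4 hd4, eventually_ge_atTop r] with N hN hrN
  rw [stmt11_integral_muA θ k (β N) (μA N) (hdecomp N hrN) F]
  congr 1
  congr 1
  · exact Finset.sum_congr rfl fun j _ => by rw [hθF j]
  · exact Finset.sum_congr rfl fun i hi => hSF _ (hN i hi)

end AuxStmt11

set_option maxHeartbeats 4000000 in
/-- near a point `t₀ ∉ supp(ν) ∪ Θ` with `∫ dν/(t₀−x)² = 1` and
`∫ dν/(t₀−x)³ ≠ 0`, for small `ε` and large `N` the unique solution `t₀(N)` of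
`∫ dμ_{A_N}(x)/(t−x)² = 1` in `]t₀−ε,t₀+ε[` satisfies:
if `]t₀−ε,t₀[ ⊆ U_ν` and `]t₀,t₀+ε[ ⊆ ℝ \ U_ν` then
`]t₀−ε,t₀+ε[ ∩ U_N = ]t₀−ε,t₀(N)[`; and symmetrically in the other case. -/
theorem stmt11
    (ν : Measure ℝ) [IsProbabilityMeasure ν] (hcomp : IsCompact (MeasSupp ν))
    (J r : ℕ) (θ : Fin J → ℝ) (k : Fin J → ℕ)
    (hθanti : StrictAnti θ) (hθsupp : ∀ j, θ j ∉ MeasSupp ν)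
    (hkpos : ∀ j, 0 < k j) (hkr : ∑ j, k j = r)
    (β : ℕ → ℕ → ℝ) (μA : ℕ → Measure ℝ)
    (hprob : ∀ N, IsProbabilityMeasure (μA N))
    (hdecomp : ∀ N, r ≤ N → μA N = (N : ℝ≥0∞)⁻¹ •
      ((∑ j, (k j : ℝ≥0∞) • Measure.dirac (θ j)) +
        ∑ i ∈ Finset.range (N - r), Measure.dirac (β N i)))
    (hweak : ∀ f : BoundedContinuousFunction ℝ ℝ,
      Tendsto (fun N => ∫ x, f x ∂(μA N)) atTop (𝓝 (∫ x, f x ∂ν)))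
    (hβ : ∀ ε > 0, ∀ᶠ N in atTop, ∀ i ∈ Finset.range (N - r),
      Metric.infDist (β N i) (MeasSupp ν) < ε)
    (t₀ : ℝ) (ht₀ : t₀ ∉ MeasSupp ν ∪ Set.range θ)
    (h2 : ∫ x, ((t₀ - x) ^ 2)⁻¹ ∂ν = 1) (h3 : ∫ x, ((t₀ - x) ^ 3)⁻¹ ∂ν ≠ 0) :
    ∃ ε₀ > (0 : ℝ), ∀ ε, 0 < ε → ε ≤ ε₀ →
      ((Set.Ioo (t₀ - ε) t₀ ⊆ USet ν ∧ Set.Ioo t₀ (t₀ + ε) ⊆ (USet ν)ᶜ) →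
        ∀ᶠ N in atTop, ∃ tN ∈ Set.Ioo (t₀ - ε) (t₀ + ε),
          (∫ x, ((tN - x) ^ 2)⁻¹ ∂(μA N)) = 1 ∧
          (∀ t' ∈ Set.Ioo (t₀ - ε) (t₀ + ε),
            (∫ x, ((t' - x) ^ 2)⁻¹ ∂(μA N)) = 1 → t' = tN) ∧
          Set.Ioo (t₀ - ε) (t₀ + ε) ∩ USet (μA N) = Set.Ioo (t₀ - ε) tN) ∧
      ((Set.Ioo t₀ (t₀ + ε) ⊆ USet ν ∧ Set.Ioo (t₀ - ε) t₀ ⊆ (USet ν)ᶜ) →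
        ∀ᶠ N in atTop, ∃ tN ∈ Set.Ioo (t₀ - ε) (t₀ + ε),
          (∫ x, ((tN - x) ^ 2)⁻¹ ∂(μA N)) = 1 ∧
          (∀ t' ∈ Set.Ioo (t₀ - ε) (t₀ + ε),
            (∫ x, ((t' - x) ^ 2)⁻¹ ∂(μA N)) = 1 → t' = tN) ∧
          Set.Ioo (t₀ - ε) (t₀ + ε) ∩ USet (μA N) = Set.Ioo tN (t₀ + ε)) := by
  classical
  have hSclosed : IsClosed (MeasSupp ν) := stmt11_measSupp_closed ν
  have hSne : (MeasSupp ν).Nonempty := stmt11_measSupp_nonempty ν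
  have hKclosed : IsClosed (MeasSupp ν ∪ Set.range θ) :=
    hSclosed.union (Set.finite_range θ).isClosed
  have hKne : (MeasSupp ν ∪ Set.range θ).Nonempty := hSne.mono subset_union_left
  set d : ℝ := Metric.infDist t₀ (MeasSupp ν ∪ Set.range θ) with hd
  have hdpos : 0 < d := (hKclosed.notMem_iff_infDist_pos hKne).1 ht₀
  set c : ℝ := d / 2 with hc
  have hcpos : 0 < c := by rw [hc]; positivity
  set h₃ : ℝ := ∫ x, ((t₀ - x) ^ 3)⁻¹ ∂ν with hh₃
  have h₃ne : h₃ ≠ 0 := h3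
  have h₃abs : 0 < |h₃| := abs_pos.2 h₃ne
  set m : ℝ := |h₃| / 2 with hm
  have hmpos : 0 < m := by rw [hm]; exact div_pos h₃abs two_pos
  set ε₀ : ℝ := min (d / 4) (|h₃| * c ^ 4 / 12) with hε₀def
  have hε₀pos : 0 < ε₀ := lt_min (by positivity)
    (div_pos (mul_pos h₃abs (by positivity)) (by norm_num))
  have hε₀d4 : ε₀ ≤ d / 4 := min_le_left _ _
  have hε₀12 : ε₀ ≤ |h₃| * c ^ 4 / 12 := min_le_right _ _
  -- distance facts
  have hdist_θ : ∀ j, d ≤ |t₀ - θ j| := by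
    intro j
    have h1 := Metric.infDist_le_dist_of_mem (x := t₀)
      (show θ j ∈ MeasSupp ν ∪ Set.range θ from Or.inr ⟨j, rfl⟩)
    rw [Real.dist_eq] at h1
    exact le_trans (le_refl d) h1
  have hdist_S : ∀ x ∈ MeasSupp ν, d ≤ |t₀ - x| := by
    intro x hx
    have h1 := Metric.infDist_le_dist_of_mem (x := t₀)
      (show x ∈ MeasSupp ν ∪ Set.range θ from Or.inl hx)
    rw [Real.dist_eq] at h1
    exact h1
  have hθagree : ∀ s : ℝ, |s - t₀| ≤ d / 4 → ∀ j, c ≤ |s - θ j| := by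
    intro s hs j
    have h1 := hdist_θ j
    have h2' : |t₀ - θ j| ≤ |t₀ - s| + |s - θ j| := by
      calc |t₀ - θ j| = |(t₀ - s) + (s - θ j)| := by congr 1; ring
        _ ≤ |t₀ - s| + |s - θ j| := abs_add_le _ _
    have h3' : |t₀ - s| = |s - t₀| := abs_sub_comm _ _
    rw [hc]; linarith
  have hagreeS : ∀ s : ℝ, |s - t₀| ≤ d / 4 → ∀ x,
      Metric.infDist x (MeasSupp ν) < d / 4 → c ≤ |s - x| := by
    intro s hs x hx
    obtain ⟨y, hy, hxy⟩ := (Metric.infDist_lt_iff hSne).1 hx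
    rw [Real.dist_eq] at hxy
    have h1 := hdist_S y hy
    have h2' : |t₀ - y| ≤ |t₀ - s| + |s - x| + |x - y| := by
      calc |t₀ - y| = |((t₀ - s) + (s - x)) + (x - y)| := by congr 1; ring
        _ ≤ |(t₀ - s) + (s - x)| + |x - y| := abs_add_le _ _
        _ ≤ |t₀ - s| + |s - x| + |x - y| := by linarith [abs_add_le (t₀ - s) (s - x)]
    have h3' : |t₀ - s| = |s - t₀| := abs_sub_comm _ _
    rw [hc]; linarith
  -- finite-sum versions of the integrals
  set FN : ℕ → ℝ → ℝ := fun N t => (N : ℝ)⁻¹ * ((∑ j, (k j : ℝ) * ((t - θ j) ^ 2)⁻¹) +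
      ∑ i ∈ Finset.range (N - r), ((t - β N i) ^ 2)⁻¹) with hFNdef
  set HNf : ℕ → ℝ → ℝ := fun N t => (N : ℝ)⁻¹ * ((∑ j, (k j : ℝ) * ((t - θ j) ^ 3)⁻¹) +
      ∑ i ∈ Finset.range (N - r), ((t - β N i) ^ 3)⁻¹) with hHNdef
  have hae : ∀ᵐ x ∂ν, x ∈ MeasSupp ν := by
    rw [ae_iff]
    exact stmt11_measSupp_ae ν
  -- weak limits
  have W2 : ∀ s : ℝ, |s - t₀| ≤ d / 4 →
      Tendsto (fun N => FN N s) atTop (𝓝 (∫ x, ((s - x) ^ 2)⁻¹ ∂ν)) := by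
    intro s hs
    obtain ⟨F, hF⟩ := stmt11_trunc2 s c hcpos
    have hagr : ∀ x, c ≤ |s - x| → F x = ((s - x) ^ 2)⁻¹ := by
      intro x hx
      rw [hF, max_eq_left hx, sq_abs]
    have h1 := stmt11_tendsto_sum θ k β μA ν hdecomp hweak hβ
      (fun x => ((s - x) ^ 2)⁻¹) F (d / 4) (by positivity)
      (fun j => hagr _ (hθagree s hs j)) (fun x hx => hagr _ (hagreeS s hs x hx))
    have h2' : ∫ x, F x ∂ν = ∫ x, ((s - x) ^ 2)⁻¹ ∂ν := by
      apply integral_congr_ae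
      filter_upwards [hae] with x hx
      exact hagr x (hagreeS s hs x (by rw [Metric.infDist_zero_of_mem hx]; positivity))
    rw [h2'] at h1
    exact h1
  have ht00 : |t₀ - t₀| ≤ d / 4 := by rw [sub_self, abs_zero]; positivity
  have W3 : Tendsto (fun N => HNf N t₀) atTop (𝓝 h₃) := by
    obtain ⟨F, hF⟩ := stmt11_trunc3 t₀ c hcpos
    have hagr : ∀ x, c ≤ |t₀ - x| → F x = ((t₀ - x) ^ 3)⁻¹ := by
      intro x hx
      rw [hF, max_eq_left hx]
      have hy : t₀ - x ≠ 0 := by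
        intro h
        rw [h, abs_zero] at hx
        linarith
      have h4 : |t₀ - x| ^ 4 = (t₀ - x) ^ 4 := by
        rw [← abs_pow, abs_of_nonneg (by positivity)]
      rw [h4]
      field_simp
    have h1 := stmt11_tendsto_sum θ k β μA ν hdecomp hweak hβ
      (fun x => ((t₀ - x) ^ 3)⁻¹) F (d / 4) (by positivity)
      (fun j => hagr _ (hθagree t₀ ht00 j)) (fun x hx => hagr _ (hagreeS t₀ ht00 x hx))
    have h2' : ∫ x, F x ∂ν = h₃ := by
      rw [hh₃]
      apply integral_congr_ae
      filter_upwards [hae] with x hx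
      exact hagr x (hagreeS t₀ ht00 x (by rw [Metric.infDist_zero_of_mem hx]; positivity))
    rw [h2'] at h1
    exact h1
  -- main per-N facts
  have hMain : ∀ N : ℕ, (r ≤ N ∧ 0 < N) →
      (∀ i ∈ Finset.range (N - r), Metric.infDist (β N i) (MeasSupp ν) < d / 4) →
      (∀ t ∈ Icc (t₀ - ε₀) (t₀ + ε₀), HasDerivAt (FN N) (-2 * HNf N t) t) ∧
      (∀ t ∈ Icc (t₀ - ε₀) (t₀ + ε₀), |HNf N t - HNf N t₀| ≤ 3 / c ^ 4 * |t - t₀|) ∧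
      (∀ t ∈ Icc (t₀ - ε₀) (t₀ + ε₀), (t ∈ USet (μA N) ↔ 1 < FN N t)) := by
    rintro N ⟨hrN, hNpos⟩ hβd
    have hdθ : ∀ t ∈ Icc (t₀ - ε₀) (t₀ + ε₀), ∀ j, c ≤ |t - θ j| := by
      intro t ht j
      apply hθagree t _ j
      rw [abs_le]
      exact ⟨by linarith [ht.1, hε₀d4], by linarith [ht.2, hε₀d4]⟩
    have hdβ : ∀ t ∈ Icc (t₀ - ε₀) (t₀ + ε₀), ∀ i ∈ Finset.range (N - r),
        c ≤ |t - β N i| := by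
      intro t ht i hi
      apply hagreeS t _ _ (hβd i hi)
      rw [abs_le]
      exact ⟨by linarith [ht.1, hε₀d4], by linarith [ht.2, hε₀d4]⟩
    have hneθ : ∀ t ∈ Icc (t₀ - ε₀) (t₀ + ε₀), ∀ j, t ≠ θ j := by
      intro t ht j he
      have := hdθ t ht j
      rw [he, sub_self, abs_zero] at this
      linarith
    have hneβ : ∀ t ∈ Icc (t₀ - ε₀) (t₀ + ε₀), ∀ i ∈ Finset.range (N - r), t ≠ β N i := by
      intro t ht i hi he
      have := hdβ t ht i hi
      rw [he, sub_self, abs_zero] at this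
      linarith
    refine ⟨?_, ?_, ?_⟩
    · -- derivative of FN
      intro t ht
      have hA : HasDerivAt (fun s => ∑ j, (k j : ℝ) * ((s - θ j) ^ 2)⁻¹)
          (∑ j, (k j : ℝ) * (-2 * ((t - θ j) ^ 3)⁻¹)) t := by
        apply HasDerivAt.fun_sum
        intro j _
        exact (stmt11_hasDerivAt_inv2 (θ j) t (hneθ t ht j)).const_mul (k j : ℝ)
      have hB : HasDerivAt (fun s => ∑ i ∈ Finset.range (N - r), ((s - β N i) ^ 2)⁻¹)
          (∑ i ∈ Finset.range (N - r), (-2 * ((t - β N i) ^ 3)⁻¹)) t :=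
        HasDerivAt.fun_sum fun i hi => stmt11_hasDerivAt_inv2 (β N i) t (hneβ t ht i hi)
      have hAB := (hA.add hB).const_mul ((N : ℝ)⁻¹)
      have heq : (N : ℝ)⁻¹ * ((∑ j, (k j : ℝ) * (-2 * ((t - θ j) ^ 3)⁻¹)) +
          ∑ i ∈ Finset.range (N - r), (-2 * ((t - β N i) ^ 3)⁻¹)) = -2 * HNf N t :=
        (stmt11_factor_sum (-2) ((N : ℝ)⁻¹) k _ _).symm
      rw [heq] at hAB
      exact hAB
    · -- Lipschitz bound for HNf
      have hder3 : ∀ t ∈ Icc (t₀ - ε₀) (t₀ + ε₀), HasDerivAt (HNf N)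
          (-3 * ((N : ℝ)⁻¹ * ((∑ j, (k j : ℝ) * ((t - θ j) ^ 4)⁻¹) +
            ∑ i ∈ Finset.range (N - r), ((t - β N i) ^ 4)⁻¹))) t := by
        intro t ht
        have hA : HasDerivAt (fun s => ∑ j, (k j : ℝ) * ((s - θ j) ^ 3)⁻¹)
            (∑ j, (k j : ℝ) * (-3 * ((t - θ j) ^ 4)⁻¹)) t := by
          apply HasDerivAt.fun_sum
          intro j _
          exact (stmt11_hasDerivAt_inv3 (θ j) t (hneθ t ht j)).const_mul (k j : ℝ)
        have hB : HasDerivAt (fun s => ∑ i ∈ Finset.range (N - r), ((s - β N i) ^ 3)⁻¹)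
            (∑ i ∈ Finset.range (N - r), (-3 * ((t - β N i) ^ 4)⁻¹)) t :=
          HasDerivAt.fun_sum fun i hi => stmt11_hasDerivAt_inv3 (β N i) t (hneβ t ht i hi)
        have hAB := (hA.add hB).const_mul ((N : ℝ)⁻¹)
        have heq : (N : ℝ)⁻¹ * ((∑ j, (k j : ℝ) * (-3 * ((t - θ j) ^ 4)⁻¹)) +
            ∑ i ∈ Finset.range (N - r), (-3 * ((t - β N i) ^ 4)⁻¹)) =
            -3 * ((N : ℝ)⁻¹ * ((∑ j, (k j : ℝ) * ((t - θ j) ^ 4)⁻¹) +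
              ∑ i ∈ Finset.range (N - r), ((t - β N i) ^ 4)⁻¹)) :=
          (stmt11_factor_sum (-3) ((N : ℝ)⁻¹) k _ _).symm
        rw [heq] at hAB
        exact hAB
      have hbound : ∀ t ∈ Icc (t₀ - ε₀) (t₀ + ε₀),
          ‖-3 * ((N : ℝ)⁻¹ * ((∑ j, (k j : ℝ) * ((t - θ j) ^ 4)⁻¹) +
            ∑ i ∈ Finset.range (N - r), ((t - β N i) ^ 4)⁻¹))‖ ≤ 3 / c ^ 4 := by
        intro t ht
        have hP0 : (0:ℝ) ≤ (N : ℝ)⁻¹ * ((∑ j, (k j : ℝ) * ((t - θ j) ^ 4)⁻¹) +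
            ∑ i ∈ Finset.range (N - r), ((t - β N i) ^ 4)⁻¹) := by positivity
        have hterm : ∀ y : ℝ, c ≤ |t - y| → ((t - y) ^ 4)⁻¹ ≤ (c ^ 4)⁻¹ := by
          intro y hy
          apply inv_anti₀ (by positivity)
          calc c ^ 4 ≤ |t - y| ^ 4 := pow_le_pow_left₀ hcpos.le hy 4
            _ = (t - y) ^ 4 := by rw [← abs_pow, abs_of_nonneg (by positivity)]
        have hP1 : (N : ℝ)⁻¹ * ((∑ j, (k j : ℝ) * ((t - θ j) ^ 4)⁻¹) +
            ∑ i ∈ Finset.range (N - r), ((t - β N i) ^ 4)⁻¹) ≤ (c ^ 4)⁻¹ :=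
          stmt11_sum_bound k hkr hrN hNpos _ _ _ (by positivity)
            (fun j => hterm _ (hdθ t ht j)) (fun i hi => hterm _ (hdβ t ht i hi))
        rw [Real.norm_eq_abs, abs_mul, abs_of_nonneg hP0, show |(-3:ℝ)| = 3 by norm_num]
        calc 3 * ((N : ℝ)⁻¹ * ((∑ j, (k j : ℝ) * ((t - θ j) ^ 4)⁻¹) +
              ∑ i ∈ Finset.range (N - r), ((t - β N i) ^ 4)⁻¹)) ≤ 3 * (c ^ 4)⁻¹ := by linarith
          _ = 3 / c ^ 4 := by rw [div_eq_mul_inv]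
      intro t ht
      have ht₀I : t₀ ∈ Icc (t₀ - ε₀) (t₀ + ε₀) := ⟨by linarith, by linarith⟩
      have hres := Convex.norm_image_sub_le_of_norm_hasDerivWithin_le
        (fun x hx => (hder3 x hx).hasDerivWithinAt) hbound (convex_Icc _ _) ht₀I ht
      simpa [Real.norm_eq_abs] using hres
    · -- characterization of USet
      intro t ht
      constructor
      · intro htU
        by_contra hle
        push_neg at hle
        refine stmt11_vF_not_pos ?_ htU
        rw [stmt11_integral_muA θ k (β N) (μA N) (hdecomp N hrN) (fun x => ((t - x) ^ 2)⁻¹)]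
        exact hle
      · intro hlt
        show 0 < vF (μA N) t
        apply stmt11_vF_pos (δ := Real.sqrt (c ^ 2 * (FN N t - 1)))
        · exact Real.sqrt_pos.2 (mul_pos (by positivity) (by linarith))
        · rw [stmt11_integral_muA θ k (β N) (μA N) (hdecomp N hrN)
            (fun x => ((t - x) ^ 2 + 1 ^ 2)⁻¹)]
          apply stmt11_sum_bound k hkr hrN hNpos _ _ 1 (by norm_num)
          · intro j
            apply inv_le_one_of_one_le₀
            nlinarith [sq_nonneg (t - θ j)]
          · intro i _
            apply inv_le_one_of_one_le₀
            nlinarith [sq_nonneg (t - β N i)]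
        · intro v hv0 hvδ
          rw [stmt11_integral_muA θ k (β N) (μA N) (hdecomp N hrN)
            (fun x => ((t - x) ^ 2 + v ^ 2)⁻¹)]
          have hq : (0:ℝ) < 1 + v ^ 2 / c ^ 2 := by positivity
          have hv2 : v ^ 2 < c ^ 2 * (FN N t - 1) := by
            have h1 : v ^ 2 < (Real.sqrt (c ^ 2 * (FN N t - 1))) ^ 2 :=
              pow_lt_pow_left₀ hvδ hv0 (by norm_num)
            rwa [Real.sq_sqrt (mul_nonneg (by positivity) (by linarith))] at h1
          have hterm2 : ∀ y : ℝ, c ≤ |t - y| →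
              (1 + v ^ 2 / c ^ 2)⁻¹ * ((t - y) ^ 2)⁻¹ ≤ ((t - y) ^ 2 + v ^ 2)⁻¹ := by
            intro y hy
            have hy2 : c ^ 2 ≤ (t - y) ^ 2 := by
              calc c ^ 2 ≤ |t - y| ^ 2 := pow_le_pow_left₀ hcpos.le hy 2
                _ = (t - y) ^ 2 := sq_abs _
            have hypos : (0:ℝ) < (t - y) ^ 2 := lt_of_lt_of_le (by positivity) hy2
            rw [← mul_inv]
            apply inv_anti₀
            · positivity
            · have hqnn : (0:ℝ) ≤ v ^ 2 / c ^ 2 := by positivity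
              have hqc : v ^ 2 / c ^ 2 * c ^ 2 = v ^ 2 := by field_simp
              nlinarith [mul_le_mul_of_nonneg_left hy2 hqnn]
          have hfac : (1 + v ^ 2 / c ^ 2)⁻¹ * FN N t =
              (N : ℝ)⁻¹ * ((∑ j, (k j : ℝ) * ((1 + v ^ 2 / c ^ 2)⁻¹ * ((t - θ j) ^ 2)⁻¹)) +
                ∑ i ∈ Finset.range (N - r), (1 + v ^ 2 / c ^ 2)⁻¹ * ((t - β N i) ^ 2)⁻¹) :=
            stmt11_factor_sum _ _ k _ _
          have hkey : (1 + v ^ 2 / c ^ 2)⁻¹ * FN N t ≤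
              (N : ℝ)⁻¹ * ((∑ j, (k j : ℝ) * ((t - θ j) ^ 2 + v ^ 2)⁻¹) +
                ∑ i ∈ Finset.range (N - r), ((t - β N i) ^ 2 + v ^ 2)⁻¹) := by
            rw [hfac]
            exact stmt11_sum_mono k _ _ _ _ (fun j => hterm2 (θ j) (hdθ t ht j))
              (fun i hi => hterm2 (β N i) (hdβ t ht i hi))
          have hgt : 1 < (1 + v ^ 2 / c ^ 2)⁻¹ * FN N t := by
            rw [show (1 + v ^ 2 / c ^ 2)⁻¹ * FN N t = FN N t / (1 + v ^ 2 / c ^ 2) by ring,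
              one_lt_div hq]
            have h7 : v ^ 2 / c ^ 2 < FN N t - 1 := by
              rw [div_lt_iff₀ (by positivity)]
              nlinarith [hv2]
            linarith
          linarith
  have hHclose : ∀ N : ℕ,
      (∀ t ∈ Icc (t₀ - ε₀) (t₀ + ε₀), |HNf N t - HNf N t₀| ≤ 3 / c ^ 4 * |t - t₀|) →
      |HNf N t₀ - h₃| < |h₃| / 4 →
      ∀ t ∈ Icc (t₀ - ε₀) (t₀ + ε₀), |HNf N t - h₃| ≤ |h₃| / 2 := by
    intro N hlip hcl t ht
    have h1 := hlip t ht
    have h2' : |t - t₀| ≤ ε₀ := by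
      rw [abs_le]; exact ⟨by linarith [ht.1], by linarith [ht.2]⟩
    have h6 : 3 / c ^ 4 * |t - t₀| ≤ |h₃| / 4 := by
      calc 3 / c ^ 4 * |t - t₀| ≤ 3 / c ^ 4 * (|h₃| * c ^ 4 / 12) :=
            mul_le_mul_of_nonneg_left (le_trans h2' hε₀12) (by positivity)
        _ = |h₃| / 4 := by field_simp; ring
    calc |HNf N t - h₃| ≤ |HNf N t - HNf N t₀| + |HNf N t₀ - h₃| := abs_sub_le _ _ _
      _ ≤ |h₃| / 2 := by linarith
  refine ⟨ε₀, hε₀pos, ?_⟩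
  intro ε hεpos hεε₀
  have hE2 : ∀ᶠ N in atTop, |HNf N t₀ - h₃| < |h₃| / 4 := by
    have hball : ∀ᶠ y in 𝓝 h₃, |y - h₃| < |h₃| / 4 := by
      filter_upwards [Metric.ball_mem_nhds h₃ (show (0:ℝ) < |h₃| / 4 by positivity)] with y hy
      rwa [Metric.mem_ball, Real.dist_eq] at hy
    exact W3.eventually hball
  have hE3 : ∀ᶠ N in atTop, |FN N t₀ - 1| < m * ε / 2 := by
    have hW := W2 t₀ ht00
    rw [h2] at hW
    have hball : ∀ᶠ y in 𝓝 (1:ℝ), |y - 1| < m * ε / 2 := by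
      filter_upwards [Metric.ball_mem_nhds (1:ℝ) (div_pos (mul_pos hmpos hεpos) two_pos)] with y hy
      rwa [Metric.mem_ball, Real.dist_eq] at hy
    exact hW.eventually hball
  have hGood : ∀ᶠ N in atTop, (r ≤ N ∧ 0 < N) ∧
      (∀ i ∈ Finset.range (N - r), Metric.infDist (β N i) (MeasSupp ν) < d / 4) ∧
      |HNf N t₀ - h₃| < |h₃| / 4 ∧ |FN N t₀ - 1| < m * ε / 2 := by
    filter_upwards [eventually_ge_atTop r, eventually_gt_atTop 0,
      hβ (d / 4) (by positivity), hE2, hE3] with N h1' h2'' h3' h4' h5'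
    exact ⟨⟨h1', h2''⟩, h3', h4', h5'⟩
  constructor
  · -- case 1: U_ν on the left of t₀
    rintro ⟨hyp1a, hyp1b⟩
    have hsign : 0 < h₃ := by
      rcases lt_trichotomy h₃ 0 with hneg | hzero | hpos
      · exfalso
        have hsU : (t₀ - ε / 2) ∈ USet ν := hyp1a ⟨by linarith, by linarith⟩
        have hgs : 1 < ∫ x, ((t₀ - ε / 2 - x) ^ 2)⁻¹ ∂ν := by
          by_contra hle
          push_neg at hle
          exact stmt11_vF_not_pos hle hsU
        have hsd : |t₀ - ε / 2 - t₀| ≤ d / 4 := by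
          rw [abs_le]
          constructor
          · linarith [hεε₀, hε₀d4]
          · linarith
        have hev1 : ∀ᶠ N in atTop, FN N (t₀ - ε / 2) ∈ Ioi (1:ℝ) :=
          (W2 _ hsd).eventually (isOpen_Ioi.eventually_mem hgs)
        have hev2 : ∀ᶠ N in atTop, FN N (t₀ - ε / 2) < 1 := by
          filter_upwards [hGood] with N hG
          obtain ⟨hN01, hβd, hH4, hF0⟩ := hG
          obtain ⟨hder2, hlip, _⟩ := hMain N hN01 hβd
          have hHc := hHclose N hlip hH4
          have hHneg : ∀ t ∈ Icc (t₀ - ε₀) (t₀ + ε₀), m ≤ -(HNf N (2 * t₀ - t)) := by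
            intro t ht
            have hmem : 2 * t₀ - t ∈ Icc (t₀ - ε₀) (t₀ + ε₀) :=
              ⟨by linarith [ht.2], by linarith [ht.1]⟩
            have h7 := (abs_le.1 (hHc _ hmem)).2
            have h8 : |h₃| = -h₃ := abs_of_neg hneg
            rw [hm, h8]
            rw [h8] at h7
            linarith
          have ht₀I : t₀ ∈ Icc (t₀ - ε₀) (t₀ + ε₀) := ⟨by linarith, by linarith⟩
          have hIb : t₀ + ε / 2 ∈ Icc (t₀ - ε₀) (t₀ + ε₀) := ⟨by linarith, by linarith⟩
          have hgap := stmt11_gap (fun s => FN N (2 * t₀ - s))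
            (fun s => -(HNf N (2 * t₀ - s))) m _ _
            (stmt11_reflect_deriv (FN N) (HNf N) t₀ ε₀ hder2) hHneg ht₀I hIb (by linarith)
          rw [show 2 * t₀ - (t₀ + ε / 2) = t₀ - ε / 2 by ring,
            show 2 * t₀ - t₀ = t₀ by ring,
            show 2 * m * ((t₀ + ε / 2) - t₀) = m * ε by ring] at hgap
          have h9 := abs_lt.1 hF0
          have hme : 0 < m * ε := mul_pos hmpos hεpos
          linarith
        obtain ⟨N, hN1, hN2⟩ := (hev1.and hev2).exists
        rw [mem_Ioi] at hN1
        linarith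
      · exact absurd hzero h₃ne
      · exact hpos
    filter_upwards [hGood] with N hG
    obtain ⟨hN01, hβd, hH4, hF0⟩ := hG
    obtain ⟨hder2, hlip, hchar⟩ := hMain N hN01 hβd
    have hHc := hHclose N hlip hH4
    have hHpos : ∀ t ∈ Icc (t₀ - ε₀) (t₀ + ε₀), m ≤ HNf N t := by
      intro t ht
      have h7 := (abs_le.1 (hHc t ht)).1
      have h8 : |h₃| = h₃ := abs_of_pos hsign
      rw [hm, h8]
      rw [h8] at h7
      linarith
    obtain ⟨tN, htN, hFtN, sAnti, hiff⟩ :=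
      stmt11_core (FN N) (HNf N) t₀ ε₀ ε m hεpos hεε₀ hmpos hder2 hHpos hF0
    have htNIoo : tN ∈ Ioo (t₀ - ε) (t₀ + ε) := ⟨by linarith [htN.1], by linarith [htN.2]⟩
    have htNI : tN ∈ Icc (t₀ - ε₀) (t₀ + ε₀) :=
      ⟨by linarith [htN.1], by linarith [htN.2]⟩
    refine ⟨tN, htNIoo, ?_, ?_, ?_⟩
    · rw [stmt11_integral_muA θ k (β N) (μA N) (hdecomp N hN01.1)
        (fun x => ((tN - x) ^ 2)⁻¹)]
      exact hFtN
    · intro t' ht' hint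
      have hFt' : FN N t' = 1 := by
        rw [stmt11_integral_muA θ k (β N) (μA N) (hdecomp N hN01.1)
          (fun x => ((t' - x) ^ 2)⁻¹)] at hint
        exact hint
      have ht'I : t' ∈ Icc (t₀ - ε₀) (t₀ + ε₀) :=
        ⟨by linarith [ht'.1], by linarith [ht'.2]⟩
      exact sAnti.injOn ht'I htNI (by rw [hFt', hFtN])
    · ext t
      simp only [mem_inter_iff, mem_Ioo]
      constructor
      · rintro ⟨htIoo, htU⟩
        refine ⟨htIoo.1, ?_⟩
        have htI : t ∈ Icc (t₀ - ε₀) (t₀ + ε₀) :=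
          ⟨by linarith [htIoo.1], by linarith [htIoo.2]⟩
        exact (hiff t ⟨htIoo.1, htIoo.2⟩).1 ((hchar t htI).1 htU)
      · rintro ⟨hgt, hlt⟩
        have htIoo : t₀ - ε < t ∧ t < t₀ + ε := ⟨hgt, by linarith [htN.2]⟩
        have htI : t ∈ Icc (t₀ - ε₀) (t₀ + ε₀) :=
          ⟨by linarith [htIoo.1], by linarith [htIoo.2]⟩
        exact ⟨htIoo, (hchar t htI).2 ((hiff t ⟨htIoo.1, htIoo.2⟩).2 hlt)⟩
  · -- case 2: U_ν on the right of t₀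
    rintro ⟨hyp2a, hyp2b⟩
    have hsign : h₃ < 0 := by
      rcases lt_trichotomy h₃ 0 with hneg | hzero | hpos
      · exact hneg
      · exact absurd hzero h₃ne
      · exfalso
        have hsU : (t₀ + ε / 2) ∈ USet ν := hyp2a ⟨by linarith, by linarith⟩
        have hgs : 1 < ∫ x, ((t₀ + ε / 2 - x) ^ 2)⁻¹ ∂ν := by
          by_contra hle
          push_neg at hle
          exact stmt11_vF_not_pos hle hsU
        have hsd : |t₀ + ε / 2 - t₀| ≤ d / 4 := by
          rw [abs_le]
          constructor
          · linarith
          · linarith [hεε₀, hε₀d4]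
        have hev1 : ∀ᶠ N in atTop, FN N (t₀ + ε / 2) ∈ Ioi (1:ℝ) :=
          (W2 _ hsd).eventually (isOpen_Ioi.eventually_mem hgs)
        have hev2 : ∀ᶠ N in atTop, FN N (t₀ + ε / 2) < 1 := by
          filter_upwards [hGood] with N hG
          obtain ⟨hN01, hβd, hH4, hF0⟩ := hG
          obtain ⟨hder2, hlip, _⟩ := hMain N hN01 hβd
          have hHc := hHclose N hlip hH4
          have hHpos : ∀ t ∈ Icc (t₀ - ε₀) (t₀ + ε₀), m ≤ HNf N t := by
            intro t ht
            have h7 := (abs_le.1 (hHc t ht)).1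
            have h8 : |h₃| = h₃ := abs_of_pos hpos
            rw [hm, h8]
            rw [h8] at h7
            linarith
          have ht₀I : t₀ ∈ Icc (t₀ - ε₀) (t₀ + ε₀) := ⟨by linarith, by linarith⟩
          have hIb : t₀ + ε / 2 ∈ Icc (t₀ - ε₀) (t₀ + ε₀) := ⟨by linarith, by linarith⟩
          have hgap := stmt11_gap (FN N) (HNf N) m _ _ hder2 hHpos ht₀I hIb (by linarith)
          rw [show 2 * m * ((t₀ + ε / 2) - t₀) = m * ε by ring] at hgap
          have h9 := abs_lt.1 hF0
          have hme : 0 < m * ε := mul_pos hmpos hεpos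
          linarith
        obtain ⟨N, hN1, hN2⟩ := (hev1.and hev2).exists
        rw [mem_Ioi] at hN1
        linarith
    filter_upwards [hGood] with N hG
    obtain ⟨hN01, hβd, hH4, hF0⟩ := hG
    obtain ⟨hder2, hlip, hchar⟩ := hMain N hN01 hβd
    have hHc := hHclose N hlip hH4
    have hHneg : ∀ t ∈ Icc (t₀ - ε₀) (t₀ + ε₀), m ≤ -(HNf N (2 * t₀ - t)) := by
      intro t ht
      have hmem : 2 * t₀ - t ∈ Icc (t₀ - ε₀) (t₀ + ε₀) :=
        ⟨by linarith [ht.2], by linarith [ht.1]⟩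
      have h7 := (abs_le.1 (hHc _ hmem)).2
      have h8 : |h₃| = -h₃ := abs_of_neg hsign
      rw [hm, h8]
      rw [h8] at h7
      linarith
    have hrefl := stmt11_reflect_deriv (FN N) (HNf N) t₀ ε₀ hder2
    have hF0' : |(fun s => FN N (2 * t₀ - s)) t₀ - 1| < m * ε / 2 := by
      simpa [show 2 * t₀ - t₀ = t₀ by ring] using hF0
    obtain ⟨sN, hsN, hFsN, sAnti, hiff⟩ :=
      stmt11_core (fun s => FN N (2 * t₀ - s)) (fun s => -(HNf N (2 * t₀ - s))) t₀ ε₀ ε m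
        hεpos hεε₀ hmpos hrefl hHneg hF0'
    have hFNtN : FN N (2 * t₀ - sN) = 1 := hFsN
    have htNIoo2 : 2 * t₀ - sN ∈ Ioo (t₀ - ε / 2) (t₀ + ε / 2) :=
      ⟨by linarith [hsN.2], by linarith [hsN.1]⟩
    have htNIoo : 2 * t₀ - sN ∈ Ioo (t₀ - ε) (t₀ + ε) :=
      ⟨by linarith [htNIoo2.1], by linarith [htNIoo2.2]⟩
    refine ⟨2 * t₀ - sN, htNIoo, ?_, ?_, ?_⟩
    · rw [stmt11_integral_muA θ k (β N) (μA N) (hdecomp N hN01.1)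
        (fun x => ((2 * t₀ - sN - x) ^ 2)⁻¹)]
      exact hFNtN
    · intro t' ht' hint
      have hFt' : FN N t' = 1 := by
        rw [stmt11_integral_muA θ k (β N) (μA N) (hdecomp N hN01.1)
          (fun x => ((t' - x) ^ 2)⁻¹)] at hint
        exact hint
      have h9 : (fun s => FN N (2 * t₀ - s)) (2 * t₀ - t') = 1 := by
        simp only
        rw [show 2 * t₀ - (2 * t₀ - t') = t' by ring]
        exact hFt'
      have hm1 : 2 * t₀ - t' ∈ Icc (t₀ - ε₀) (t₀ + ε₀) :=
        ⟨by linarith [ht'.2], by linarith [ht'.1]⟩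
      have hm2 : sN ∈ Icc (t₀ - ε₀) (t₀ + ε₀) :=
        ⟨by linarith [hsN.1], by linarith [hsN.2]⟩
      have h10 := sAnti.injOn hm1 hm2 (h9.trans hFsN.symm)
      linarith [h10]
    · ext t
      simp only [mem_inter_iff, mem_Ioo]
      constructor
      · rintro ⟨htIoo, htU⟩
        refine ⟨?_, htIoo.2⟩
        have htI : t ∈ Icc (t₀ - ε₀) (t₀ + ε₀) :=
          ⟨by linarith [htIoo.1], by linarith [htIoo.2]⟩
        have h1 : 1 < FN N t := (hchar t htI).1 htU
        have h1' : 1 < (fun s => FN N (2 * t₀ - s)) (2 * t₀ - t) := by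
          simp only
          rw [show 2 * t₀ - (2 * t₀ - t) = t by ring]
          exact h1
        have hIo : 2 * t₀ - t ∈ Ioo (t₀ - ε) (t₀ + ε) :=
          ⟨by linarith [htIoo.2], by linarith [htIoo.1]⟩
        have h11 := (hiff _ hIo).1 h1'
        linarith
      · rintro ⟨hgt, hlt⟩
        have htIoo : t₀ - ε < t ∧ t < t₀ + ε := ⟨by linarith [htNIoo2.1], hlt⟩
        have htI : t ∈ Icc (t₀ - ε₀) (t₀ + ε₀) :=
          ⟨by linarith [htIoo.1], by linarith [htIoo.2]⟩
        have hIo : 2 * t₀ - t ∈ Ioo (t₀ - ε) (t₀ + ε) :=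
          ⟨by linarith [htIoo.2], by linarith [htIoo.1]⟩
        have hslt : 2 * t₀ - t < sN := by linarith
        have h1' := (hiff _ hIo).2 hslt
        have h1 : 1 < FN N t := by
          rwa [show 2 * t₀ - (2 * t₀ - t) = t by ring] at h1'
        exact ⟨htIoo, (hchar t htI).2 h1⟩
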